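/- Let $R \in \mathcal{K}^\square_{j+1}(A,B) \cap \mathcal{Z}^\perp$ be a nonzero block vector, where the block Arnoldi process for $(A,B)$ runs $j+1$ steps without breakdown and $\mathbf{Z}_j^*\mathbf{U}_j$ is invertible. Then there exists a block characteristic polynomial $P(\lambda)$ of degree $j$ for $A_j := (\mathbf{Z}_j^*\mathbf{U}_j)^{-1}\mathbf{Z}_j^*A\mathbf{U}_j$ with respect to $E_1 R_B$ (i.e., $P(A_j)\circ(E_1 R_B) = 0$ with nonzero leading coefficient) such that $R = P(A)\circ B$. -/

import Mathlib

open Matrix Polynomial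

abbrev Mat (s : ℕ) := Matrix (Fin s) (Fin s) ℂ

/-- The `(p,q)` block (of size `s × s`) of a `js × js` block matrix. -/
def blk {j s : ℕ} (H : Matrix (Fin j × Fin s) (Fin j × Fin s) ℂ) (p q : Fin j) :
    Mat s := Matrix.of fun a b => H (p, a) (q, b)

/-- The `i`-th block canonical vector `E_i = e_i ⊗ I_s`. -/
def blkE {j s : ℕ} (i : Fin j) : Matrix (Fin j × Fin s) (Fin s) ℂ :=
  Matrix.of fun pa b => if pa.1 = i ∧ pa.2 = b then 1 else 0

/-- Block upper Hessenberg: all blocks strictly below the first subdiagonal vanish. -/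
def BUH {j s : ℕ} (H : Matrix (Fin j × Fin s) (Fin j × Fin s) ℂ) : Prop :=
  ∀ p q : Fin j, (q : ℕ) + 1 < (p : ℕ) → blk H p q = 0

/-- The action `P(N) ∘ W := ∑ᵢ Nⁱ W Pᵢ` of a matrix polynomial on a block vector. -/
noncomputable def act {n : Type*} [Fintype n] [DecidableEq n] {s : ℕ}
    (P : Polynomial (Mat s)) (N : Matrix n n ℂ) (W : Matrix n (Fin s) ℂ) :
    Matrix n (Fin s) ℂ :=
  ∑ i ∈ Finset.range (P.natDegree + 1), (N ^ i) * W * P.coeff i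

/-- Evaluation of a matrix polynomial at a scalar: `P(z) = ∑ᵢ zⁱ Pᵢ`. -/
noncomputable def evalS {s : ℕ} (P : Polynomial (Mat s)) (z : ℂ) : Mat s :=
  ∑ i ∈ Finset.range (P.natDegree + 1), z ^ i • P.coeff i

/-- The subdiagonal block `Γ_i = H_{(i-1)(i-2)}` (paper indexing, `2 ≤ i ≤ j`),
with the convention `Γ_i = I` out of range (in particular `Γ₁ = I`). -/
noncomputable def Gam {j s : ℕ} (H : Matrix (Fin j × Fin s) (Fin j × Fin s) ℂ)
    (i : ℕ) : Mat s :=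
  if h : 2 ≤ i ∧ i ≤ j then blk H ⟨i - 1, by omega⟩ ⟨i - 2, by omega⟩ else 1

lemma pow_entry_zero {j s : ℕ} (H : Matrix (Fin j × Fin s) (Fin j × Fin s) ℂ)
    (hH : BUH H) : ∀ (k : ℕ) (p q : Fin j) (a b : Fin s),
    (q : ℕ) + k < (p : ℕ) → (H ^ k) (p, a) (q, b) = 0 := by
  intro k
  induction k with
  | zero =>
    intro p q a b h
    have hpq : p ≠ q := by intro e; subst e; omega
    simp [Matrix.one_apply, Prod.ext_iff]; tauto
  | succ k ih =>
    intro p q a b h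
    rw [pow_succ', Matrix.mul_apply]
    apply Finset.sum_eq_zero
    rintro ⟨r, c⟩ -
    by_cases hr : (r : ℕ) + 1 < (p : ℕ)
    · have := congrFun (congrFun (hH p r hr) a) c
      simp [blk] at this
      simp [this]
    · rw [ih r q c b (by omega), mul_zero]

lemma sandwich {j s : ℕ} (N : Matrix (Fin j × Fin s) (Fin j × Fin s) ℂ)
    (i q : Fin j) (a b : Fin s) :
    ((blkE (s := s) i)ᴴ * N * blkE (s := s) q) a b = N (i, a) (q, b) := by
  simp only [Matrix.mul_apply, Matrix.conjTranspose_apply, blkE, Matrix.of_apply,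
    Fintype.sum_prod_type]
  simp [apply_ite (star : ℂ → ℂ), ite_and, Finset.sum_ite_eq, Finset.mul_sum]

lemma sandwich_pow_zero {j s : ℕ} (hj : 0 < j)
    (H : Matrix (Fin j × Fin s) (Fin j × Fin s) ℂ) (hH : BUH H)
    {k : ℕ} (hk : k < j - 1) :
    (blkE (s := s) (⟨j - 1, Nat.sub_lt hj Nat.one_pos⟩ : Fin j))ᴴ * (H ^ k) * blkE (s := s) (⟨0, hj⟩ : Fin j) = 0 := by
  ext a b
  rw [sandwich]
  exact pow_entry_zero H hH k _ _ a b (by simp; omega)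

lemma pow_decomp {j s : ℕ} (hj : 0 < j) {m : Type*} [Fintype m] [DecidableEq m]
    (H : Matrix (Fin j × Fin s) (Fin j × Fin s) ℂ) (hH : BUH H)
    (X : Matrix m m ℂ) (V : Matrix m (Fin j × Fin s) ℂ) (v : Matrix m (Fin s) ℂ)
    (hX : X * V = V * H + v * (blkE (s := s) (⟨j - 1, Nat.sub_lt hj Nat.one_pos⟩ : Fin j))ᴴ) :
    ∀ i ≤ j, X ^ i * (V * blkE (s := s) (⟨0, hj⟩ : Fin j)) =
      V * (H ^ i * blkE (s := s) (⟨0, hj⟩ : Fin j)) +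
      (if i = j then v * ((blkE (s := s) (⟨j - 1, Nat.sub_lt hj Nat.one_pos⟩ : Fin j))ᴴ * (H ^ (j - 1)) * blkE (s := s) (⟨0, hj⟩ : Fin j)) else 0) := by
  intro i
  induction i with
  | zero =>
    intro _
    rw [if_neg (by omega : ¬ (0 = j))]
    simp
  | succ i ih =>
    intro hij
    have hi : i ≠ j := by omega
    have hIH := ih (by omega)
    rw [if_neg hi, add_zero] at hIH
    have : X ^ (i + 1) * (V * blkE (s := s) (⟨0, hj⟩ : Fin j)) =
        X * (X ^ i * (V * blkE (s := s) (⟨0, hj⟩ : Fin j))) := by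
      rw [pow_succ', Matrix.mul_assoc]
    rw [this, hIH, ← Matrix.mul_assoc, ← Matrix.mul_assoc, hX]
    rw [Matrix.add_mul, Matrix.add_mul]
    congr 1
    · simp only [pow_succ', Matrix.mul_assoc]
    · by_cases hij' : i + 1 = j
      · rw [if_pos hij']
        have : i = j - 1 := by omega
        subst this
        rw [Matrix.mul_assoc, Matrix.mul_assoc, Matrix.mul_assoc]
      · rw [if_neg hij']
        rw [Matrix.mul_assoc, Matrix.mul_assoc]
        rw [← Matrix.mul_assoc ((blkE _)ᴴ)]
        rw [sandwich_pow_zero hj H hH (by omega)]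
        simp

lemma act_decomp {j s : ℕ} (hj : 0 < j) {m : Type*} [Fintype m] [DecidableEq m]
    (H : Matrix (Fin j × Fin s) (Fin j × Fin s) ℂ) (hH : BUH H)
    (X : Matrix m m ℂ) (V : Matrix m (Fin j × Fin s) ℂ) (v : Matrix m (Fin s) ℂ)
    (hX : X * V = V * H + v * (blkE (s := s) (⟨j - 1, Nat.sub_lt hj Nat.one_pos⟩ : Fin j))ᴴ)
    (RB : Mat s) (Q : Polynomial (Mat s)) (hQ : Q.natDegree ≤ j) :
    act Q X (V * blkE (s := s) (⟨0, hj⟩ : Fin j) * RB) =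
      V * act Q H (blkE (s := s) (⟨0, hj⟩ : Fin j) * RB) +
      v * ((blkE (s := s) (⟨j - 1, Nat.sub_lt hj Nat.one_pos⟩ : Fin j))ᴴ * (H ^ (j - 1)) * blkE (s := s) (⟨0, hj⟩ : Fin j)) * RB * Q.coeff j := by
  set E1 := blkE (s := s) (⟨0, hj⟩ : Fin j)
  set G := (blkE (s := s) (⟨j - 1, Nat.sub_lt hj Nat.one_pos⟩ : Fin j))ᴴ * (H ^ (j - 1)) * E1
  have key : ∀ i ∈ Finset.range (Q.natDegree + 1),
      X ^ i * (V * E1 * RB) * Q.coeff i =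
      V * (H ^ i * (E1 * RB) * Q.coeff i) +
        (if i = j then v * G * RB * Q.coeff i else 0) := by
    intro i hi
    have hij : i ≤ j := by
      have := Finset.mem_range.mp hi; omega
    have hd := pow_decomp hj H hH X V v hX i hij
    have : X ^ i * (V * E1 * RB) * Q.coeff i = (X ^ i * (V * E1)) * RB * Q.coeff i := by
      simp only [Matrix.mul_assoc]
    rw [this, hd, Matrix.add_mul, Matrix.add_mul]
    congr 1
    · simp only [E1, Matrix.mul_assoc]
    · split
      · simp only [G, E1, Matrix.mul_assoc]
      · simp
  rw [act, act, Finset.sum_congr rfl key, Finset.sum_add_distrib, ← Matrix.mul_sum,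
    Finset.sum_ite_eq' (Finset.range (Q.natDegree + 1)) j
      (fun i => v * G * RB * Q.coeff i)]
  congr 1
  by_cases hjd : j ∈ Finset.range (Q.natDegree + 1)
  · rw [if_pos hjd]
  · rw [if_neg hjd]
    have : Q.natDegree < j := by
      simp [Finset.mem_range] at hjd; omega
    rw [Polynomial.coeff_eq_zero_of_natDegree_lt this, Matrix.mul_zero]

theorem aux_main {n j s : ℕ} (hj : 0 < j)
    (A : Matrix (Fin n) (Fin n) ℂ)
    (U Z : Matrix (Fin n) (Fin j × Fin s) ℂ)
    (u : Matrix (Fin n) (Fin s) ℂ)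
    (Hj : Matrix (Fin j × Fin s) (Fin j × Fin s) ℂ) (Γ : Mat s)
    (harn : A * U = U * Hj + u * Γ * (blkE (s := s) (⟨j - 1, Nat.sub_lt hj Nat.one_pos⟩ : Fin j))ᴴ)
    (hBUH : BUH Hj)
    (hZU : IsUnit (Zᴴ * U))
    (RB : Mat s)
    (B : Matrix (Fin n) (Fin s) ℂ)
    (hB : B = U * blkE (s := s) (⟨0, hj⟩ : Fin j) * RB)
    (Aj : Matrix (Fin j × Fin s) (Fin j × Fin s) ℂ)
    (hAj : Aj = (Zᴴ * U)⁻¹ * (Zᴴ * A * U))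
    (R : Matrix (Fin n) (Fin s) ℂ) (hR0 : R ≠ 0)
    (hRK : ∃ Q : Polynomial (Mat s), Q.natDegree ≤ j ∧ R = act Q A B)
    (hRZ : Zᴴ * R = 0) :
    ∃ P : Polynomial (Mat s), P.natDegree = j ∧ P.leadingCoeff ≠ 0 ∧
      act P Aj (blkE (s := s) (⟨0, hj⟩ : Fin j) * RB) = 0 ∧
      R = act P A B := by
  obtain ⟨Q, hQd, hQR⟩ := hRK
  set E1 := blkE (s := s) (⟨0, hj⟩ : Fin j) with hE1
  set Ej := blkE (s := s) (⟨j - 1, Nat.sub_lt hj Nat.one_pos⟩ : Fin j) with hEj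
  set G := Ejᴴ * (Hj ^ (j - 1)) * E1 with hG
  set M := (Zᴴ * U)⁻¹ * (Zᴴ * (u * Γ)) with hM
  have hdet : IsUnit (Zᴴ * U).det := (Matrix.isUnit_iff_isUnit_det _).mp hZU
  have hinv : (Zᴴ * U)⁻¹ * (Zᴴ * U) = 1 := Matrix.nonsing_inv_mul _ hdet
  have hinv' : (Zᴴ * U) * (Zᴴ * U)⁻¹ = 1 := Matrix.mul_nonsing_inv _ hdet
  have harn' : A * U = U * Hj + (u * Γ) * Ejᴴ := by rw [harn]
  -- decomposition for A
  have decA : R = U * act Q Hj (E1 * RB) + (u * Γ) * G * RB * Q.coeff j := by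
    rw [hQR, hB]
    exact act_decomp hj Hj hBUH A U (u * Γ) harn' RB Q hQd
  -- Aj relation
  have hinv2 : (Zᴴ * U)⁻¹ * Zᴴ * U = 1 := by rw [Matrix.mul_assoc]; exact hinv
  have hAj' : Aj * 1 = 1 * Hj + M * Ejᴴ := by
    rw [Matrix.mul_one, Matrix.one_mul, hAj, hM, Matrix.mul_assoc Zᴴ A U, harn',
      Matrix.mul_add, Matrix.mul_add]
    simp only [← Matrix.mul_assoc]
    rw [hinv2, Matrix.one_mul]
  have decAj : act Q Aj (E1 * RB) = act Q Hj (E1 * RB) + M * G * RB * Q.coeff j := by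
    have := act_decomp hj Hj hBUH Aj 1 M hAj' RB Q hQd
    rwa [Matrix.one_mul, Matrix.one_mul, ← hE1, ← hEj, ← hG] at this
  -- Zᴴ R = (ZᴴU) * (act Q Hj (E1 RB) + M G RB Qj)
  have key : (Zᴴ * U) * (act Q Hj (E1 * RB) + M * G * RB * Q.coeff j) = 0 := by
    rw [← hRZ, decA, Matrix.mul_add, Matrix.mul_add]
    congr 1
    · rw [← Matrix.mul_assoc]
    · simp only [hM, ← Matrix.mul_assoc]
      rw [hinv', Matrix.one_mul]
  have hsum0 : act Q Hj (E1 * RB) + M * G * RB * Q.coeff j = 0 := by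
    have := congrArg (fun W => (Zᴴ * U)⁻¹ * W) key
    simpa [← Matrix.mul_assoc, hinv] using this
  have hactAj : act Q Aj (E1 * RB) = 0 := by rw [decAj, hsum0]
  have hQj : Q.coeff j ≠ 0 := by
    intro h0
    apply hR0
    have hH0 : act Q Hj (E1 * RB) = 0 := by
      have := hsum0
      rwa [h0, Matrix.mul_zero, add_zero] at this
    rw [decA, hH0, h0, Matrix.mul_zero, Matrix.mul_zero, add_zero]
  have hdeg : Q.natDegree = j :=
    le_antisymm hQd (Polynomial.le_natDegree_of_ne_zero hQj)
  exact ⟨Q, hdeg, by rwa [Polynomial.leadingCoeff, hdeg], hactAj, hQR⟩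


/-- any nonzero block vector in `𝒦□_{j+1}(A,B) ∩ 𝒵^⊥` is of the form
`P(A)∘B` for a block characteristic polynomial `P` of `A_j` with respect to `E₁R_B`. -/
theorem residual_is_char_poly_action {n j s : ℕ} (hj : 0 < j)
    (A : Matrix (Fin n) (Fin n) ℂ)
    (U Z : Matrix (Fin n) (Fin j × Fin s) ℂ)
    (u : Matrix (Fin n) (Fin s) ℂ)
    (Hj : Matrix (Fin j × Fin s) (Fin j × Fin s) ℂ) (Γ : Mat s)
    (harn : A * U = U * Hj + u * Γ * (blkE (s := s) (⟨j - 1, by omega⟩ : Fin j))ᴴ)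
    (hU : Uᴴ * U = 1) (hu : uᴴ * u = 1) (hUu : Uᴴ * u = 0)
    (hBUH : BUH Hj)
    (hsub : ∀ i : ℕ, 2 ≤ i → i ≤ j → IsUnit (Gam Hj i)) (hΓ : IsUnit Γ)
    (hZ : Zᴴ * Z = 1) (hZU : IsUnit (Zᴴ * U))
    (RB : Mat s) (hRB : IsUnit RB)
    (B : Matrix (Fin n) (Fin s) ℂ)
    (hB : B = U * blkE (s := s) (⟨0, hj⟩ : Fin j) * RB)
    (Aj : Matrix (Fin j × Fin s) (Fin j × Fin s) ℂ)
    (hAj : Aj = (Zᴴ * U)⁻¹ * (Zᴴ * A * U))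
    (R : Matrix (Fin n) (Fin s) ℂ) (hR0 : R ≠ 0)
    (hRK : ∃ Q : Polynomial (Mat s), Q.natDegree ≤ j ∧ R = act Q A B)
    (hRZ : Zᴴ * R = 0) :
    ∃ P : Polynomial (Mat s), P.natDegree = j ∧ P.leadingCoeff ≠ 0 ∧
      act P Aj (blkE (s := s) (⟨0, hj⟩ : Fin j) * RB) = 0 ∧
      R = act P A B := by
  exact aux_main hj A U Z u Hj Γ harn hBUH hZU RB B hB Aj hAj R hR0 hRK hRZ
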